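/- Let 0<s,α<1 with s/α<1, and let 1<p≤∞ with 1<pα≤∞. If f : ℝ → ℝ (or ℂ → ℂ) is Hölder continuous of order α, then ‖f(u)‖_{Ḃ^s_{p,∞}} ≲ ‖u‖_{Ḃ^{s/α}_{pα,∞}}^α for all u in the homogeneous Besov space Ḃ^{s/α}_{pα,∞}(ℝ^d). -/

import Mathlib

open MeasureTheory ENNReal

/-- Homogeneous Besov `Ḃ^s_{p,∞}` seminorm via the difference characterization:
`‖u‖_{Ḃ^s_{p,∞}} = sup_t |t|^{-s} ‖u(·+t) − u(·)‖_{L^p}`. -/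
noncomputable def besovSup (d : ℕ) (s : ℝ) (p : ℝ≥0∞)
    (u : EuclideanSpace ℝ (Fin d) → ℝ) : ℝ≥0∞ :=
  ⨆ t : EuclideanSpace ℝ (Fin d),
    (‖t‖₊ : ℝ≥0∞) ^ (-s) * eLpNorm (fun x => u (x + t) - u x) p volume

/-- If `0 < s, α < 1`, `s/α < 1`, `1 < p ≤ ∞`, `1 < pα ≤ ∞` and `f` is Hölder continuous of
order `α`, then `‖f(u)‖_{Ḃ^s_{p,∞}} ≲ ‖u‖_{Ḃ^{s/α}_{pα,∞}}^α`. -/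
theorem stmt2 (d : ℕ) (hd : 1 ≤ d) (s α : ℝ)
    (hs0 : 0 < s) (hs1 : s < 1) (hα0 : 0 < α) (hα1 : α < 1) (hsα : s / α < 1)
    (p : ℝ≥0∞) (hp : 1 < p) (hpα : 1 < p * ENNReal.ofReal α)
    (f : ℝ → ℝ) (L : ℝ) (hL : 0 < L)
    (hf : ∀ z w : ℝ, |f z - f w| ≤ L * |z - w| ^ α) :
    ∃ C : ℝ≥0∞, 0 < C ∧ C ≠ ∞ ∧ ∀ u : EuclideanSpace ℝ (Fin d) → ℝ,
      besovSup d s p (fun x => f (u x))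
        ≤ C * (besovSup d (s / α) (p * ENNReal.ofReal α) u) ^ α := by
  refine ⟨ENNReal.ofReal L, ENNReal.ofReal_pos.2 hL, ENNReal.ofReal_ne_top, fun u => ?_⟩
  rw [besovSup]
  apply iSup_le
  intro t
  set q := p * ENNReal.ofReal α with hq
  set E := eLpNorm (fun x => u (x + t) - u x) q volume with hE
  have h1 : eLpNorm (fun x => f (u (x + t)) - f (u x)) p volume
      ≤ ENNReal.ofReal L * E ^ α := by
    calc eLpNorm (fun x => f (u (x + t)) - f (u x)) p volume
        ≤ eLpNorm (L • fun x => ‖u (x + t) - u x‖ ^ α) p volume := by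
          apply eLpNorm_mono
          intro x
          simp only [Pi.smul_apply, smul_eq_mul, Real.norm_eq_abs]
          rw [abs_of_nonneg (show (0:ℝ) ≤ L * |u (x + t) - u x| ^ α by positivity)]
          exact hf (u (x + t)) (u x)
      _ = ‖L‖₊ • eLpNorm (fun x => ‖u (x + t) - u x‖ ^ α) p volume := by
          rw [eLpNorm_const_smul]; rfl
      _ = ENNReal.ofReal L * E ^ α := by
          rw [eLpNorm_norm_rpow _ hα0, ← hq, ← hE, ENNReal.smul_def, smul_eq_mul]
          congr 1
          rw [← enorm_eq_nnnorm, ← ofReal_norm, Real.norm_of_nonneg hL.le]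
  have hexp : (-(s / α)) * α = -s := by
    field_simp
  calc (‖t‖₊ : ℝ≥0∞) ^ (-s) * eLpNorm (fun x => f (u (x + t)) - f (u x)) p volume
      ≤ (‖t‖₊ : ℝ≥0∞) ^ (-s) * (ENNReal.ofReal L * E ^ α) := mul_le_mul_right h1 _
    _ = ENNReal.ofReal L * (((‖t‖₊ : ℝ≥0∞) ^ (-(s / α)) * E) ^ α) := by
        rw [ENNReal.mul_rpow_of_nonneg _ _ hα0.le, ← ENNReal.rpow_mul, hexp]
        ring
    _ ≤ ENNReal.ofReal L * (besovSup d (s / α) q u) ^ α := by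
        gcongr
        exact le_iSup (fun t => (‖t‖₊ : ℝ≥0∞) ^ (-(s / α)) *
          eLpNorm (fun x => u (x + t) - u x) q volume) t
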